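/- arXiv:2402.12344 — 2 statements merged into one kernel-verified Lean document; each statement's English description precedes it below -/
import Mathlib

section
/- Let X, Y be finite simple graphs with n = |V(Y)|, let p = (x, p_y) and q = (x, q_y) span an inner edge of Z = X[Y] (so p_y q_y ∈ E(Y)). Then the number of vertices r of Z adjacent to both p and q equals |N_Y(p_y) ∩ N_Y(q_y)| + |N_X(x)|·n. -/
/-- The lexicographic product of two simple graphs. -/
def lexProd {V W : Type*} (X : SimpleGraph V) (Y : SimpleGraph W) : SimpleGraph (V × W) where
  Adj p q := X.Adj p.1 q.1 ∨ (p.1 = q.1 ∧ Y.Adj p.2 q.2)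
  symm := by
    constructor
    rintro p q (h | ⟨h1, h2⟩)
    · exact Or.inl h.symm
    · exact Or.inr ⟨h1.symm, h2.symm⟩
  loopless := by
    constructor
    rintro p (h | ⟨h1, h2⟩)
    · exact X.irrefl h
    · exact Y.irrefl h2

lemma ncard_prod' {V W : Type*} (A : Set V) (B : Set W) :
    (A ×ˢ B).ncard = A.ncard * B.ncard := by
  rw [← Nat.card_coe_set_eq, ← Nat.card_coe_set_eq, ← Nat.card_coe_set_eq,
    Nat.card_congr (Equiv.Set.prod A B), Nat.card_prod]

lemma lexProd_adj {V W : Type*} (X : SimpleGraph V) (Y : SimpleGraph W) (p q : V × W) :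
    (lexProd X Y).Adj p q ↔ X.Adj p.1 q.1 ∨ (p.1 = q.1 ∧ Y.Adj p.2 q.2) := Iff.rfl

/-- Common-neighbour count for an inner edge of `X[Y]`: if `p = (x, p_y)` and
`q = (x, q_y)` span an inner edge (so `p_y q_y ∈ E(Y)`), then the number of common
neighbours of `p` and `q` is `|N_Y(p_y) ∩ N_Y(q_y)| + |N_X(x)| · n`, where `n = |V(Y)|`. -/
theorem inner_edge_common_neighbours {V W : Type*} [Fintype V] [Fintype W]
    (X : SimpleGraph V) (Y : SimpleGraph W) (x : V) (py qy : W) (h : Y.Adj py qy) :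
    {r : V × W | (lexProd X Y).Adj r (x, py) ∧ (lexProd X Y).Adj r (x, qy)}.ncard =
      (Y.neighborSet py ∩ Y.neighborSet qy).ncard +
        (X.neighborSet x).ncard * Fintype.card W := by
  have hset : {r : V × W | (lexProd X Y).Adj r (x, py) ∧ (lexProd X Y).Adj r (x, qy)} =
      ({x} ×ˢ (Y.neighborSet py ∩ Y.neighborSet qy)) ∪ (X.neighborSet x ×ˢ Set.univ) := by
    ext ⟨a, b⟩
    simp only [Set.mem_setOf_eq, lexProd_adj, Set.mem_union, Set.mem_prod,
      Set.mem_singleton_iff, Set.mem_inter_iff, SimpleGraph.mem_neighborSet,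
      Set.mem_univ, and_true]
    rw [X.adj_comm x a, Y.adj_comm py b, Y.adj_comm qy b]
    tauto
  have hdisj : Disjoint ({x} ×ˢ (Y.neighborSet py ∩ Y.neighborSet qy))
      (X.neighborSet x ×ˢ (Set.univ : Set W)) := by
    rw [Set.disjoint_left]
    rintro ⟨a, b⟩ ⟨rfl, -⟩ ⟨ha, -⟩
    exact X.loopless.irrefl _ ha
  rw [hset, Set.ncard_union_eq hdisj, ncard_prod', ncard_prod', Set.ncard_singleton, one_mul,
    Set.ncard_univ, Nat.card_eq_fintype_card]
end

section
/- Let X, Y be finite simple graphs with n = |V(Y)|, and let p = (p_x, p_y), q = (q_x, q_y) span an outer edge of Z = X[Y] (so p_x q_x ∈ E(X)). Then the number of vertices r of Z adjacent to both p and q equals |N_Y(p_y)| + |N_Y(q_y)| + |N_X(p_x) ∩ N_X(q_x)|·n. -/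
lemma ncard_prod {V W : Type*} [Fintype V] [Fintype W] (s : Set V) (t : Set W) :
    (s ×ˢ t).ncard = s.ncard * t.ncard := by
  classical
  rw [Set.ncard_eq_toFinset_card', Set.ncard_eq_toFinset_card', Set.ncard_eq_toFinset_card',
    Set.toFinset_prod, Finset.card_product]

/-- Common-neighbour count for an outer edge of `X[Y]`: if `p = (p_x, p_y)` and
`q = (q_x, q_y)` span an outer edge (so `p_x q_x ∈ E(X)`), then the number of common
neighbours of `p` and `q` is `|N_Y(p_y)| + |N_Y(q_y)| + |N_X(p_x) ∩ N_X(q_x)| · n`,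
where `n = |V(Y)|`. -/
theorem outer_edge_common_neighbours {V W : Type*} [Fintype V] [Fintype W]
    (X : SimpleGraph V) (Y : SimpleGraph W) (px qx : V) (py qy : W) (h : X.Adj px qx) :
    {r : V × W | (lexProd X Y).Adj r (px, py) ∧ (lexProd X Y).Adj r (qx, qy)}.ncard =
      (Y.neighborSet py).ncard + (Y.neighborSet qy).ncard +
        (X.neighborSet px ∩ X.neighborSet qx).ncard * Fintype.card W := by
  have hne : px ≠ qx := h.ne
  have hset : {r : V × W | (lexProd X Y).Adj r (px, py) ∧ (lexProd X Y).Adj r (qx, qy)} =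
      ({px} ×ˢ Y.neighborSet py) ∪ ({qx} ×ˢ Y.neighborSet qy) ∪
        ((X.neighborSet px ∩ X.neighborSet qx) ×ˢ (Set.univ : Set W)) := by
    have hadj : ∀ a b : V × W, (lexProd X Y).Adj a b ↔
        (X.Adj a.1 b.1 ∨ (a.1 = b.1 ∧ Y.Adj a.2 b.2)) := fun _ _ => Iff.rfl
    ext ⟨rx, ry⟩
    simp only [Set.mem_setOf_eq, hadj, Set.mem_union, Set.mem_prod, Set.mem_singleton_iff,
      Set.mem_inter_iff, SimpleGraph.mem_neighborSet, Set.mem_univ, and_true]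
    constructor
    · rintro ⟨hp | ⟨rfl, hp⟩, hq | ⟨rfl, hq⟩⟩
      · exact Or.inr ⟨hp.symm, hq.symm⟩
      · exact Or.inl (Or.inr ⟨rfl, hq.symm⟩)
      · exact Or.inl (Or.inl ⟨rfl, hp.symm⟩)
      · exact absurd rfl hne
    · rintro ((⟨rfl, hp⟩ | ⟨rfl, hq⟩) | ⟨hp, hq⟩)
      · exact ⟨Or.inr ⟨rfl, hp.symm⟩, Or.inl h⟩
      · exact ⟨Or.inl h.symm, Or.inr ⟨rfl, hq.symm⟩⟩
      · exact ⟨Or.inl hp.symm, Or.inl hq.symm⟩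
  rw [hset, Set.ncard_union_eq, Set.ncard_union_eq, ncard_prod, ncard_prod, ncard_prod,
    Set.ncard_singleton, Set.ncard_singleton, Set.ncard_univ, Nat.card_eq_fintype_card,
    one_mul, one_mul]
  · rw [Set.disjoint_left]
    rintro ⟨rx, ry⟩ ⟨rfl, _⟩ ⟨rfl, _⟩
    exact hne rfl
  · rw [Set.disjoint_left]
    rintro ⟨rx, ry⟩ h1 ⟨⟨hp, hq⟩, -⟩
    rcases h1 with ⟨rfl, -⟩ | ⟨rfl, -⟩
    · exact X.irrefl hp
    · exact X.irrefl hq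
end
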